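/- Let s be a real number and ℓ a positive integer. If sin(s n ℓ π) → 0 as n → ∞ over the natural numbers, then s ℓ is rational (and hence s is rational). -/

import Mathlib

theorem sin_tendsto_zero_rational (s : ℝ) (ℓ : ℕ) (hℓ : 0 < ℓ)
    (h : Filter.Tendsto (fun n : ℕ => Real.sin (s * n * ℓ * Real.pi)) Filter.atTop (nhds 0)) :
    (∃ q : ℚ, (q : ℝ) = s * ℓ) ∧ ∃ q : ℚ, (q : ℝ) = s := by
  set t : ℝ := s * ℓ with ht
  have h' : Filter.Tendsto (fun n : ℕ => Real.sin (n * (t * Real.pi)))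
      Filter.atTop (nhds 0) := by
    convert h using 2 with n
    rw [ht]
    ring
  have h1 : Filter.Tendsto (fun n : ℕ => Real.sin (((n : ℝ) + 1) * (t * Real.pi)))
      Filter.atTop (nhds 0) := by
    have := h'.comp (Filter.tendsto_add_atTop_nat 1)
    convert this using 2 with n
    simp only [Function.comp]
    push_cast
    ring_nf
  have h2 : Filter.Tendsto (fun n : ℕ => Real.cos (n * (t * Real.pi)) * Real.sin (t * Real.pi))
      Filter.atTop (nhds 0) := by
    have key := h1.sub (h'.mul_const (Real.cos (t * Real.pi)))
    simp only [zero_mul, sub_zero] at key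
    convert key using 2 with n
    rw [show ((n : ℝ) + 1) * (t * Real.pi) = n * (t * Real.pi) + t * Real.pi by ring,
      Real.sin_add]
    ring
  have h3 : Filter.Tendsto
      (fun n : ℕ => (Real.cos (n * (t * Real.pi)) * Real.sin (t * Real.pi)) ^ 2)
      Filter.atTop (nhds (Real.sin (t * Real.pi) ^ 2)) := by
    have base : Filter.Tendsto (fun n : ℕ => Real.sin (t * Real.pi) ^ 2
        - Real.sin (n * (t * Real.pi)) * Real.sin (n * (t * Real.pi)) * Real.sin (t * Real.pi) ^ 2)
        Filter.atTop (nhds (Real.sin (t * Real.pi) ^ 2 - 0 * 0 * Real.sin (t * Real.pi) ^ 2)) :=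
      tendsto_const_nhds.sub ((h'.mul h').mul_const (Real.sin (t * Real.pi) ^ 2))
    rw [show Real.sin (t * Real.pi) ^ 2 - 0 * 0 * Real.sin (t * Real.pi) ^ 2
        = Real.sin (t * Real.pi) ^ 2 by ring] at base
    convert base using 2 with n
    have hpy := Real.sin_sq_add_cos_sq (n * (t * Real.pi))
    nlinarith
  have hsq : Real.sin (t * Real.pi) ^ 2 = 0 := by
    have h4 : Filter.Tendsto
        (fun n : ℕ => (Real.cos (n * (t * Real.pi)) * Real.sin (t * Real.pi)) ^ 2)
        Filter.atTop (nhds 0) := by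
      simpa [sq] using h2.mul h2
    exact tendsto_nhds_unique h3 h4
  have hs0 : Real.sin (t * Real.pi) = 0 := by
    nlinarith [hsq]
  obtain ⟨k, hk⟩ := Real.sin_eq_zero_iff.mp hs0
  have htk : t = (k : ℝ) := by
    have hπ : Real.pi ≠ 0 := Real.pi_ne_zero
    field_simp at hk
    linarith [hk]
  refine ⟨⟨(k : ℚ), by exact_mod_cast htk.symm⟩, ⟨(k : ℚ) / (ℓ : ℚ), ?_⟩⟩
  have hℓ' : (ℓ : ℝ) ≠ 0 := Nat.cast_ne_zero.mpr hℓ.ne'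
  push_cast
  rw [div_eq_iff hℓ']
  rw [← htk]
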